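/- On (C^2)^{⊗4} define τ = P₋^{(13)} ⊗ (1/3)Π_S^{(24)}, where P₋ is the projection onto the singlet state and Π_S is the projection onto the symmetric (triplet) subspace of two qubits, acting on the indicated factor pairs. Let S = X₁₂ ⊗ X₃₄ be the double-swap unitary exchanging factors 1↔2 and 3↔4, and τ' = SτS†. Then τ and τ' are orthogonal: Tr(ττ') = 0. -/

import Mathlib

open scoped Matrix Kronecker

noncomputable section

abbrev Qubit := EuclideanSpace ℂ (Fin 2)
abbrev TwoQubit := EuclideanSpace ℂ (Fin 2 × Fin 2)
abbrev Idx4 := Fin 2 × Fin 2 × Fin 2 × Fin 2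
abbrev FourQubit := EuclideanSpace ℂ Idx4

/-- Elementary tensor of two qubit vectors. -/
def tp (a b : Qubit) : TwoQubit := WithLp.toLp 2 (fun p : Fin 2 × Fin 2 => a p.1 * b p.2)

/-- Standard basis of `ℂ²`. -/
def e (i : Fin 2) : Qubit := EuclideanSpace.single i 1

/-- Standard product basis vector `|abcd⟩` of four qubits. -/
def ket4 (a b c d : Fin 2) : FourQubit := EuclideanSpace.single (a, b, c, d) 1

/-- The state `Λ = Ψ₋⁽¹³⁾ ⊗ Ψ₋⁽²⁴⁾ = (1/2)(|0011⟩ − |0110⟩ − |1001⟩ + |1100⟩)`. -/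
def Lam : FourQubit :=
  (1 / 2 : ℂ) • (ket4 0 0 1 1 - ket4 0 1 1 0 - ket4 1 0 0 1 + ket4 1 1 0 0)

/-- The operator `A ⊗ B ⊗ C ⊗ D` acting factorwise on four qubits. -/
def kron4 (A B C D : Matrix (Fin 2) (Fin 2) ℂ) : Matrix Idx4 Idx4 ℂ :=
  Matrix.of fun p q =>
    A p.1 q.1 * B p.2.1 q.2.1 * C p.2.2.1 q.2.2.1 * D p.2.2.2 q.2.2.2

/-- The double-swap unitary permuting the tensor factors by `(1 2)(3 4)`:
`(Sv)(a,b,c,d) = v(b,a,d,c)`. -/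
def dblSwap : Matrix Idx4 Idx4 ℂ :=
  Matrix.of fun p q => if q = (p.2.1, p.1, p.2.2.2, p.2.2.1) then 1 else 0

/-- The singlet state `Ψ₋ = (1/√2)(|01⟩ − |10⟩)`. -/
def singlet : TwoQubit := ((Real.sqrt 2 : ℂ))⁻¹ • (tp (e 0) (e 1) - tp (e 1) (e 0))

/-- Projection onto the singlet state of two qubits. -/
def Pminus : Matrix (Fin 2 × Fin 2) (Fin 2 × Fin 2) ℂ :=
  Matrix.of fun p q => singlet p * (starRingEnd ℂ) (singlet q)

/-- Projection onto the symmetric (triplet) subspace of two qubits. -/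
def PiSym : Matrix (Fin 2 × Fin 2) (Fin 2 × Fin 2) ℂ := 1 - Pminus

/-- An operator `A ⊗ B` with `A` acting on factors 1,3 and `B` on factors 2,4
of `(ℂ²)^{⊗4}`. -/
def opPair13_24 (A B : Matrix (Fin 2 × Fin 2) (Fin 2 × Fin 2) ℂ) :
    Matrix Idx4 Idx4 ℂ :=
  Matrix.of fun p q =>
    A (p.1, p.2.2.1) (q.1, q.2.2.1) * B (p.2.1, p.2.2.2) (q.2.1, q.2.2.2)


def c (p : Fin 2 × Fin 2) : ℂ := if p = (0,1) then 1 else if p = (1,0) then -1 else 0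

lemma hP (p q : Fin 2 × Fin 2) : Pminus p q = (1/2 : ℂ) * c p * c q := by
  have h2 : ((Real.sqrt 2:ℂ))⁻¹ * ((Real.sqrt 2:ℂ))⁻¹ = 1/2 := by
    rw [← mul_inv]; norm_cast
    rw [Real.mul_self_sqrt (by norm_num : (0:ℝ) ≤ 2)]; norm_num
  have h2' : ((Real.sqrt 2:ℂ))^2 = 2 := by
    norm_cast; rw [Real.sq_sqrt (by norm_num : (0:ℝ) ≤ 2)]
  obtain ⟨a, b⟩ := p; obtain ⟨u, v⟩ := q
  fin_cases a <;> fin_cases b <;> fin_cases u <;> fin_cases v <;>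
    simp [Pminus, singlet, tp, e, c, EuclideanSpace.single_apply, map_mul, Prod.ext_iff] <;>
    ring_nf <;> simp [h2, h2', Prod.ext_iff]

lemma swap_conj (M : Matrix Idx4 Idx4 ℂ) (p q : Idx4) :
    (dblSwap * M * dblSwapᴴ) p q
      = M (p.2.1, p.1, p.2.2.2, p.2.2.1) (q.2.1, q.1, q.2.2.2, q.2.2.1) := by
  simp [Matrix.mul_apply, dblSwap, Matrix.conjTranspose_apply]

set_option maxHeartbeats 2000000 in
/-- With `τ = P₋⁽¹³⁾ ⊗ (1/3)Π_S⁽²⁴⁾` and `τ' = SτS†` for the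
double swap `S = X₁₂ ⊗ X₃₄`, the states `τ` and `τ'` are orthogonal:
`Tr(ττ') = 0`. -/
theorem stmt_19 (τ τ' : Matrix Idx4 Idx4 ℂ)
    (hτ : τ = opPair13_24 Pminus ((1 / 3 : ℂ) • PiSym))
    (hτ' : τ' = dblSwap * τ * dblSwapᴴ) :
    (τ * τ').trace = 0 := by
  subst hτ'
  have tr : (τ * (dblSwap * τ * dblSwapᴴ)).trace
      = ∑ p : Idx4, ∑ q : Idx4, τ p q * (dblSwap * τ * dblSwapᴴ) q p := by
    simp only [Matrix.trace, Matrix.diag]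
    exact Finset.sum_congr rfl fun p _ => Matrix.mul_apply
  rw [tr]
  have : ∀ p q : Idx4,
      τ p q * (dblSwap * τ * dblSwapᴴ) q p
        = τ p q * τ (q.2.1, q.1, q.2.2.2, q.2.2.1) (p.2.1, p.1, p.2.2.2, p.2.2.1) := by
    intro p q; rw [swap_conj]
  rw [Finset.sum_congr rfl fun p _ => Finset.sum_congr rfl fun q _ => this p q]
  subst hτ
  simp only [opPair13_24, Matrix.of_apply, Matrix.smul_apply, PiSym, Matrix.sub_apply,
    Matrix.one_apply, hP, smul_eq_mul]
  simp only [Fintype.sum_prod_type, Fin.sum_univ_two, c, Prod.ext_iff]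
  norm_num
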